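/- Let Γ be a finite connected 3-GNDB graph with parameter γ and at least one edge. Then the number of vertices of Γ is exactly 4γ. -/
import Mathlib

/-- The set of vertices closer to `a` than to `b`. -/
def closerSet {V : Type*} (G : SimpleGraph V) (a b : V) : Set V :=
  {x | G.dist x a < G.dist x b}

/-- Let `Γ` be a finite connected 3-GNDB graph with parameter `γ` and at least one edge.
Then the number of vertices of `Γ` is exactly `4γ`. -/
theorem stmt_10 {V : Type*} [Fintype V] (G : SimpleGraph V) (hconn : G.Connected)
    (hedge : ∃ a b : V, G.Adj a b) (γ : ℕ) (hγ : 0 < γ)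
    (hGNDB : ∀ a b : V, G.Adj a b →
      ({(closerSet G a b).ncard, (closerSet G b a).ncard} : Set ℕ) = {γ, 3 * γ}) :
    Fintype.card V = 4 * γ := by
  classical
  set D : V → ℤ := fun a => ∑ x : V, (G.dist x a : ℤ) with hD
  have hnear : ∀ a b x : V, G.Adj a b → G.dist x b ≤ G.dist x a + 1 := by
    intro a b x hab
    have h1 := hconn.dist_triangle (u := x) (v := a) (w := b)
    have h2 : G.dist a b = 1 := SimpleGraph.dist_eq_one_iff_adj.mpr hab
    omega
  have hncard : ∀ a b : V, (closerSet G a b).ncard =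
      (Finset.univ.filter (fun x => G.dist x a < G.dist x b)).card := by
    intro a b
    rw [closerSet, Set.ncard_eq_toFinset_card', Set.toFinset_setOf]
  -- key sum computation
  have hsum : ∀ a b : V, G.Adj a b →
      D b - D a = ((closerSet G a b).ncard : ℤ) - (closerSet G b a).ncard := by
    intro a b hab
    have hpt : ∀ x : V, (G.dist x b : ℤ) - (G.dist x a : ℤ) =
        (if G.dist x a < G.dist x b then (1 : ℤ) else 0) -
        (if G.dist x b < G.dist x a then (1 : ℤ) else 0) := by
      intro x
      rcases lt_trichotomy (G.dist x a) (G.dist x b) with h | h | h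
      · have h2 : G.dist x b = G.dist x a + 1 := le_antisymm (hnear a b x hab) h
        rw [if_pos h, if_neg (by omega), h2]; push_cast; ring
      · rw [if_neg (by omega), if_neg (by omega), h]; ring
      · have h2 : G.dist x a = G.dist x b + 1 :=
          le_antisymm (hnear b a x hab.symm) h
        rw [if_neg (by omega), if_pos h, h2]; push_cast; ring
    have : D b - D a = ∑ x : V, ((G.dist x b : ℤ) - (G.dist x a : ℤ)) := by
      rw [hD, Finset.sum_sub_distrib]
    rw [this, Finset.sum_congr rfl (fun x _ => hpt x), Finset.sum_sub_distrib,
      Finset.sum_boole, Finset.sum_boole, hncard, hncard]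
  -- for every edge, D b - D a ≡ 2γ mod 4γ
  have hmod : ∀ a b : V, G.Adj a b → (D b - D a) ≡ (2 * γ : ℤ) [ZMOD (4 * γ : ℤ)] := by
    intro a b hab
    have h := hGNDB a b hab
    rw [Set.pair_eq_pair_iff] at h
    have hs := hsum a b hab
    rcases h with ⟨h1, h2⟩ | ⟨h1, h2⟩
    · rw [h1, h2] at hs
      have : D b - D a = -(2 * γ) := by rw [hs]; push_cast; ring
      rw [this]
      have : (-(2 * (γ:ℤ))) - 2 * γ = -(4 * γ) := by ring
      exact Int.ModEq.symm (Int.modEq_iff_dvd.2 ⟨-1, by linarith [this]⟩)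
    · rw [h1, h2] at hs
      have : D b - D a = 2 * γ := by rw [hs]; push_cast; ring
      rw [this]
  -- along a walk, D changes by 2γ * length mod 4γ
  have hwalk : ∀ (x a : V) (w : G.Walk x a),
      D a ≡ D x + 2 * γ * w.length [ZMOD (4 * γ : ℤ)] := by
    intro x a w
    induction w with
    | nil => simp
    | cons h p ih =>
      rename_i u v c
      have h1 := hmod u v h
      have h2 : D v ≡ D u + 2 * γ [ZMOD (4 * γ : ℤ)] := by
        have := h1.add_right (D u)
        simpa [sub_add_cancel, add_comm] using this
      calc D c ≡ D v + 2 * γ * p.length [ZMOD (4*γ:ℤ)] := ih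
        _ ≡ (D u + 2 * γ) + 2 * γ * p.length [ZMOD (4*γ:ℤ)] := h2.add_right _
        _ = D u + 2 * γ * (SimpleGraph.Walk.cons h p).length := by
            simp [SimpleGraph.Walk.length_cons]; push_cast; ring
  have hdist : ∀ x a : V, D a ≡ D x + 2 * γ * G.dist x a [ZMOD (4 * γ : ℤ)] := by
    intro x a
    obtain ⟨w, hw⟩ := hconn.exists_walk_length_eq_dist x a
    have := hwalk x a w
    rwa [hw] at this
  -- no vertex is equidistant from the endpoints of an edge
  obtain ⟨a, b, hab⟩ := hedge
  have hne : ∀ x : V, G.dist x a ≠ G.dist x b := by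
    intro x h
    have h1 := hdist x a
    have h2 := hdist x b
    rw [h] at h1
    have h3 : D b ≡ D a [ZMOD (4 * γ : ℤ)] := h2.trans h1.symm
    have h4 : D b - D a ≡ 0 [ZMOD (4 * γ : ℤ)] := by
      simpa using h3.sub_right (D a)
    have h5 := (hmod a b hab).symm.trans h4
    have h6 : (4 * γ : ℤ) ∣ 2 * γ := by
      have := h5.dvd
      simpa using this
    have := Int.le_of_dvd (by positivity) h6
    omega
  -- conclude the count
  have hpart : (Finset.univ.filter (fun x => G.dist x a < G.dist x b)).card +
      (Finset.univ.filter (fun x => G.dist x b < G.dist x a)).card = Fintype.card V := by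
    have heq : Finset.univ.filter (fun x => G.dist x b < G.dist x a) =
        Finset.univ.filter (fun x => ¬ G.dist x a < G.dist x b) := by
      ext x
      simp only [Finset.mem_filter, Finset.mem_univ, true_and]
      have := hne x; omega
    rw [heq, Finset.card_filter_add_card_filter_not, Finset.card_univ]
  have h := hGNDB a b hab
  rw [Set.pair_eq_pair_iff] at h
  rw [hncard a b, hncard b a] at h
  rcases h with ⟨h1, h2⟩ | ⟨h1, h2⟩ <;> omega
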